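/- Let ρ > 0 be a real parameter. Define the MKdV map of one degree of freedom by p̄ = p + 2·log((1 + ρ·e^q)/(ρ + e^q)) and q̄ = q + 2·log((ρ + e^{p̄})/(1 + ρ·e^{p̄})). Then the function I(q,p) = e^{p−q} + e^{q−p} + 2ρ(e^p + e^q + e^{−p} + e^{−q}) + ρ²(e^{p+q} + e^{−(p+q)}) is invariant: I(q̄, p̄) = I(q, p). -/
import Mathlib

noncomputable section

/-- The invariant of the one-degree-of-freedom MKdV map:
`I(q,p) = e^{p−q} + e^{q−p} + 2ρ(e^p + e^q + e^{−p} + e^{−q}) + ρ²(e^{p+q} + e^{−(p+q)})`. -/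
def mkdvInv (ρ q p : ℝ) : ℝ :=
  Real.exp (p - q) + Real.exp (q - p) +
    2 * ρ * (Real.exp p + Real.exp q + Real.exp (-p) + Real.exp (-q)) +
    ρ ^ 2 * (Real.exp (p + q) + Real.exp (-(p + q)))

lemma exp_two_log {x : ℝ} (hx : 0 < x) : Real.exp (2 * Real.log x) = x ^ 2 := by
  rw [show (2 : ℝ) * Real.log x = Real.log (x ^ 2) by rw [Real.log_pow]; push_cast; ring,
    Real.exp_log (by positivity)]

/-- Step 1: the original invariant value equals the middle expression `E(A, P)`. -/
lemma mkdv_step1 (ρ A B P : ℝ) (hρ : 0 < ρ) (hA : 0 < A) (hB : 0 < B)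
    (hP : P = B * ((1 + ρ * A) / (ρ + A)) ^ 2) :
    B / A + A / B + 2 * ρ * (B + A + 1 / B + 1 / A) + ρ ^ 2 * (B * A + 1 / (B * A))
      = ρ ^ 2 * P / A + 2 * ρ * P + A * P + 1 / (P * A) + 2 * ρ / P + ρ ^ 2 * A / P
        + 2 * ρ * A + 2 * ρ / A := by
  have h1 : 0 < ρ + A := by positivity
  have h2 : 0 < 1 + ρ * A := by positivity
  have hP' : 0 < P := by rw [hP]; positivity
  have hB' : B = P * ((ρ + A) / (1 + ρ * A)) ^ 2 := by
    rw [hP]; field_simp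
  subst hB'
  field_simp
  ring

/-- Step 2: the mapped invariant value equals the middle expression `E(A, P)`. -/
lemma mkdv_step2 (ρ A P Q : ℝ) (hρ : 0 < ρ) (hA : 0 < A) (hP : 0 < P)
    (hQ : Q = A * ((ρ + P) / (1 + ρ * P)) ^ 2) :
    P / Q + Q / P + 2 * ρ * (P + Q + 1 / P + 1 / Q) + ρ ^ 2 * (P * Q + 1 / (P * Q))
      = ρ ^ 2 * P / A + 2 * ρ * P + A * P + 1 / (P * A) + 2 * ρ / P + ρ ^ 2 * A / P
        + 2 * ρ * A + 2 * ρ / A := by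
  have h1 : 0 < ρ + P := by positivity
  have h2 : 0 < 1 + ρ * P := by positivity
  have hQ' : 0 < Q := by rw [hQ]; positivity
  subst hQ
  field_simp
  ring

/-- The algebraic core of the invariance. -/
lemma mkdv_core (ρ A B P Q : ℝ) (hρ : 0 < ρ) (hA : 0 < A) (hB : 0 < B)
    (hP : P = B * ((1 + ρ * A) / (ρ + A)) ^ 2)
    (hQ : Q = A * ((ρ + P) / (1 + ρ * P)) ^ 2) :
    P / Q + Q / P + 2 * ρ * (P + Q + 1 / P + 1 / Q) + ρ ^ 2 * (P * Q + 1 / (P * Q))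
      = B / A + A / B + 2 * ρ * (B + A + 1 / B + 1 / A) + ρ ^ 2 * (B * A + 1 / (B * A)) := by
  have hP' : 0 < P := by
    rw [hP]
    have h1 : 0 < ρ + A := by positivity
    positivity
  rw [mkdv_step2 ρ A P Q hρ hA hP' hQ, mkdv_step1 ρ A B P hρ hA hB hP]

/-- The function `I(q,p)` is invariant under the one-degree-of-freedom MKdV map
`p̄ = p + 2 log((1+ρe^q)/(ρ+e^q))`, `q̄ = q + 2 log((ρ+e^{p̄})/(1+ρe^{p̄}))`, for `ρ > 0`. -/
theorem mkdv_map_invariant (ρ : ℝ) (hρ : 0 < ρ) (q p : ℝ)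
    (pbar : ℝ)
    (hpbar : pbar = p + 2 * Real.log ((1 + ρ * Real.exp q) / (ρ + Real.exp q)))
    (qbar : ℝ)
    (hqbar : qbar = q + 2 * Real.log ((ρ + Real.exp pbar) / (1 + ρ * Real.exp pbar))) :
    mkdvInv ρ qbar pbar = mkdvInv ρ q p := by
  have hA : 0 < Real.exp q := Real.exp_pos q
  have hB : 0 < Real.exp p := Real.exp_pos p
  have hx1 : (0:ℝ) < (1 + ρ * Real.exp q) / (ρ + Real.exp q) := by positivity
  have hPb : Real.exp pbar = Real.exp p * ((1 + ρ * Real.exp q) / (ρ + Real.exp q)) ^ 2 := by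
    rw [hpbar, Real.exp_add, exp_two_log hx1]
  have hPb' : 0 < Real.exp pbar := Real.exp_pos _
  have hx2 : (0:ℝ) < (ρ + Real.exp pbar) / (1 + ρ * Real.exp pbar) := by positivity
  have hQb : Real.exp qbar
      = Real.exp q * ((ρ + Real.exp pbar) / (1 + ρ * Real.exp pbar)) ^ 2 := by
    rw [hqbar, Real.exp_add, exp_two_log hx2]
  have key := mkdv_core ρ (Real.exp q) (Real.exp p) (Real.exp pbar) (Real.exp qbar)
    hρ hA hB hPb hQb
  simpa [mkdvInv, Real.exp_sub, Real.exp_neg, Real.exp_add, div_eq_mul_inv, one_div] using key
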